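/- The point (0,0,0,θ̄,0) is an extreme point of conv(P₀ ∪ P₁ ∪ P₂), i.e., it cannot be written as a convex combination λx + (1−λ)y with 0 < λ < 1 and x ≠ y, x, y ∈ conv(P₀ ∪ P₁ ∪ P₂). -/
import Mathlib


abbrev Pt := ℝ × ℝ × ℝ × ℝ × ℝ

def P0 (tl tu : ℝ) : Set Pt :=
  {p | p.1 = 0 ∧ p.2.1 = 0 ∧ p.2.2.1 = 0 ∧ p.2.2.2.2 = 0 ∧ tl ≤ p.2.2.2.1 ∧ p.2.2.2.1 ≤ tu}

def P1 (tu bl bu : ℝ) : Set Pt :=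
  {p | p.1 = 1 ∧ p.2.1 = 1 ∧ p.2.2.1 = 0 ∧ 0 ≤ p.2.2.2.1 ∧ p.2.2.2.1 ≤ tu ∧
    bl * p.2.2.2.1 ≤ p.2.2.2.2 ∧ p.2.2.2.2 ≤ bu * p.2.2.2.1}

def P2 (tl bl bu : ℝ) : Set Pt :=
  {p | p.1 = 1 ∧ p.2.1 = 0 ∧ p.2.2.1 = 1 ∧ tl ≤ p.2.2.2.1 ∧ p.2.2.2.1 ≤ 0 ∧
    bu * p.2.2.2.1 ≤ p.2.2.2.2 ∧ p.2.2.2.2 ≤ bl * p.2.2.2.1}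

def Cset (tu M : ℝ) : Set Pt :=
  {p | 0 ≤ p.1 ∧ 0 ≤ p.2.1 ∧ p.2.1 ≤ p.1 ∧ 0 ≤ p.2.2.1 ∧ p.2.2.1 ≤ p.1 ∧
    p.2.2.2.1 ≤ tu ∧ p.2.2.2.2 ≤ M * p.1 ∧ -(M * p.1) ≤ p.2.2.2.2}

lemma Cset_convex (tu M : ℝ) : Convex ℝ (Cset tu M) := by
  rintro p ⟨a1, a2, a3, a4, a5, a6, a7, a8⟩ q ⟨b1, b2, b3, b4, b5, b6, b7, b8⟩ a b ha hb hab
  refine ⟨?_, ?_, ?_, ?_, ?_, ?_, ?_, ?_⟩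
  · show 0 ≤ a * p.1 + b * q.1
    nlinarith [mul_nonneg ha a1, mul_nonneg hb b1]
  · show 0 ≤ a * p.2.1 + b * q.2.1
    nlinarith [mul_nonneg ha a2, mul_nonneg hb b2]
  · show a * p.2.1 + b * q.2.1 ≤ a * p.1 + b * q.1
    nlinarith [mul_le_mul_of_nonneg_left a3 ha, mul_le_mul_of_nonneg_left b3 hb]
  · show 0 ≤ a * p.2.2.1 + b * q.2.2.1
    nlinarith [mul_nonneg ha a4, mul_nonneg hb b4]
  · show a * p.2.2.1 + b * q.2.2.1 ≤ a * p.1 + b * q.1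
    nlinarith [mul_le_mul_of_nonneg_left a5 ha, mul_le_mul_of_nonneg_left b5 hb]
  · show a * p.2.2.2.1 + b * q.2.2.2.1 ≤ tu
    have htu : a * tu + b * tu = tu := by rw [← add_mul, hab, one_mul]
    linarith [mul_le_mul_of_nonneg_left a6 ha, mul_le_mul_of_nonneg_left b6 hb]
  · show a * p.2.2.2.2 + b * q.2.2.2.2 ≤ M * (a * p.1 + b * q.1)
    nlinarith [mul_le_mul_of_nonneg_left a7 ha, mul_le_mul_of_nonneg_left b7 hb]
  · show -(M * (a * p.1 + b * q.1)) ≤ a * p.2.2.2.2 + b * q.2.2.2.2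
    nlinarith [mul_le_mul_of_nonneg_left a8 ha, mul_le_mul_of_nonneg_left b8 hb]

lemma union_sub_Cset (tl tu bl bu : ℝ) (h1 : tl < 0) (h2 : 0 < tu) (h3 : bl < 0) (h4 : 0 < bu) :
    P0 tl tu ∪ P1 tu bl bu ∪ P2 tl bl bu ⊆ Cset tu (bu * tu + bl * tl - bl * tu - bu * tl) := by
  rintro p ((⟨e1, e2, e3, e4, e5, e6⟩ | ⟨e1, e2, e3, e4, e5, e6, e7⟩) |
      ⟨e1, e2, e3, e4, e5, e6, e7⟩)
  · exact ⟨by rw [e1], by rw [e2], by rw [e1, e2], by rw [e3], by rw [e1, e3], e6,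
      by rw [e1, e4]; nlinarith [mul_pos h2 h4, mul_pos_of_neg_of_neg h3 h1,
        mul_neg_of_pos_of_neg h4 h1, mul_neg_of_neg_of_pos h3 h2],
      by rw [e1, e4]; nlinarith [mul_pos h2 h4, mul_pos_of_neg_of_neg h3 h1,
        mul_neg_of_pos_of_neg h4 h1, mul_neg_of_neg_of_pos h3 h2]⟩
  · refine ⟨by rw [e1]; norm_num, by rw [e2]; norm_num, by rw [e1, e2], by rw [e3],
      by rw [e1, e3]; norm_num, e5, ?_, ?_⟩ <;> rw [e1] <;>
      nlinarith [mul_pos h2 h4, mul_pos_of_neg_of_neg h3 h1,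
        mul_le_mul_of_nonneg_left e5 h4.le, mul_le_mul_of_nonneg_left e4 h4.le,
        mul_le_mul_of_nonpos_left e5 h3.le, mul_le_mul_of_nonpos_left e4 h3.le,
        mul_neg_of_pos_of_neg h4 h1, mul_neg_of_neg_of_pos h3 h2, e6, e7]
  · refine ⟨by rw [e1]; norm_num, by rw [e2], by rw [e1, e2]; norm_num, by rw [e3]; norm_num,
      by rw [e1, e3], by linarith, ?_, ?_⟩ <;> rw [e1] <;>
      nlinarith [mul_pos h2 h4, mul_pos_of_neg_of_neg h3 h1,
        mul_le_mul_of_nonneg_left e4 h4.le, mul_le_mul_of_nonneg_left e5 h4.le,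
        mul_le_mul_of_nonpos_left e4 h3.le, mul_le_mul_of_nonpos_left e5 h3.le,
        mul_neg_of_pos_of_neg h4 h1, mul_neg_of_neg_of_pos h3 h2, e6, e7]

set_option maxHeartbeats 1000000 in
theorem stmt_13 (tl tu bl bu : ℝ) (h1 : tl < 0) (h2 : 0 < tu) (h3 : bl < 0) (h4 : 0 < bu) :
    ∀ x ∈ convexHull ℝ (P0 tl tu ∪ P1 tu bl bu ∪ P2 tl bl bu),
    ∀ y ∈ convexHull ℝ (P0 tl tu ∪ P1 tu bl bu ∪ P2 tl bl bu),
    ∀ l : ℝ, 0 < l → l < 1 →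
      l • x + (1 - l) • y = (((0:ℝ),(0:ℝ),(0:ℝ),tu,(0:ℝ)) : Pt) → x = y := by
  intro x hx y hy l hl0 hl1 heq
  have hxC := convexHull_min (union_sub_Cset tl tu bl bu h1 h2 h3 h4) (Cset_convex _ _) hx
  have hyC := convexHull_min (union_sub_Cset tl tu bl bu h1 h2 h3 h4) (Cset_convex _ _) hy
  obtain ⟨x1, x2, x3, x4, x5, x6, x7, x8⟩ := hxC
  obtain ⟨y1, y2, y3, y4, y5, y6, y7, y8⟩ := hyC
  have hl1' : 0 < 1 - l := by linarith
  have e1 : l * x.1 + (1 - l) * y.1 = 0 := congrArg Prod.fst heq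
  have e4 : l * x.2.2.2.1 + (1 - l) * y.2.2.2.1 = tu :=
    congrArg (fun p : Pt => p.2.2.2.1) heq
  have hx1 : x.1 = 0 := by nlinarith [mul_nonneg hl0.le x1, mul_nonneg hl1'.le y1]
  have hy1 : y.1 = 0 := by nlinarith [mul_nonneg hl0.le x1, mul_nonneg hl1'.le y1]
  have hx4 : x.2.2.2.1 = tu := by
    nlinarith [mul_nonneg hl0.le (sub_nonneg.2 x6), mul_nonneg hl1'.le (sub_nonneg.2 y6)]
  have hy4 : y.2.2.2.1 = tu := by
    nlinarith [mul_nonneg hl0.le (sub_nonneg.2 x6), mul_nonneg hl1'.le (sub_nonneg.2 y6)]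
  rw [hx1, mul_zero] at x7 x8
  rw [hy1, mul_zero] at y7 y8
  have hxv : x = (((0:ℝ),(0:ℝ),(0:ℝ),tu,(0:ℝ)) : Pt) :=
    Prod.ext hx1 (Prod.ext (show x.2.1 = 0 by linarith)
      (Prod.ext (show x.2.2.1 = 0 by linarith)
      (Prod.ext hx4 (show x.2.2.2.2 = 0 by linarith))))
  have hyv : y = (((0:ℝ),(0:ℝ),(0:ℝ),tu,(0:ℝ)) : Pt) :=
    Prod.ext hy1 (Prod.ext (show y.2.1 = 0 by linarith)
      (Prod.ext (show y.2.2.1 = 0 by linarith)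
      (Prod.ext hy4 (show y.2.2.2.2 = 0 by linarith))))
  rw [hxv, hyv]
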